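/- Let Z be an integrable real random variable with cdf F(z) = P[Z ≤ z] and finite essential supremum, let Z_1,…,Z_{n−1} be iid with the same law as Z, set Z_n := esssup Z, let Z_(1) ≤ ⋯ ≤ Z_(n) be the order statistics of Z_1,…,Z_n, and define the coverages W_i = F(Z_(i)) − F(Z_(i−1)) with F(Z_(0)) := 0. Then almost surely E[Z] ≤ ∑_{i=1}^n Z_(i) W_i. -/

import Mathlib

open MeasureTheory ProbabilityTheory

/-- Increasing rearrangement (order statistics) of a finite tuple. -/
noncomputable def sortedVec {α : Type*} [LinearOrder α] {n : ℕ} (z : Fin n → α) : Fin n → α :=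
  z ∘ Tuple.sort z

/-- The coverage `F(z_i) - F(z_{i-1})`, with the convention `F(z_0) := 0`. -/
noncomputable def coverage {n : ℕ} (F : ℝ → ℝ) (z : Fin n → ℝ) (i : Fin n) : ℝ :=
  F (z i) - (if h : 0 < (i : ℕ) then F (z ⟨(i : ℕ) - 1, by have := i.isLt; omega⟩) else 0)

/-- The full sample vector `(Z_1, …, Z_{n-1}, M)`. -/
def fullVec {Ω : Type*} {n : ℕ} (Zs : Fin (n - 1) → Ω → ℝ) (M : ℝ) (i : Fin n) (ω : Ω) : ℝ :=
  if h : (i : ℕ) < n - 1 then Zs ⟨(i : ℕ), h⟩ ω else M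

/-- Key deterministic lemma: if `z` is a monotone vector whose last entry essentially
bounds `Z`, then `E[Z] ≤ ∑ z_i W_i` where `W` is the coverage vector. -/
lemma aux_mean_le {Ω : Type*} [MeasurableSpace Ω] (P : Measure Ω) [IsProbabilityMeasure P]
    (n : ℕ) (hn : 1 ≤ n)
    (Z : Ω → ℝ) (hZmeas : Measurable Z) (hZint : Integrable Z P)
    (z : Fin n → ℝ) (hmono : Monotone z)
    (hub : ∀ᵐ x ∂P, Z x ≤ z ⟨n - 1, by omega⟩)
    (F : ℝ → ℝ) (hF : F = fun t => (P {ω | Z ω ≤ t}).toReal) :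
    (∫ x, Z x ∂P) ≤ ∑ i, z i * coverage F z i := by
  subst hF
  -- basic measurability facts
  have hmeasIic : ∀ b : ℝ, MeasurableSet {ω | Z ω ≤ b} := fun b =>
    hZmeas measurableSet_Iic
  have hmeasIoc : ∀ a b : ℝ, MeasurableSet {ω | Z ω ∈ Set.Ioc a b} := fun a b =>
    hZmeas measurableSet_Ioc
  -- the bound on the integral over an `Ioc` slab
  have hslab : ∀ a b : ℝ, a ≤ b →
      (∫ x in {ω | Z ω ∈ Set.Ioc a b}, Z x ∂P) ≤
        b * ((P {ω | Z ω ≤ b}).toReal - (P {ω | Z ω ≤ a}).toReal) := by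
    intro a b hab
    have hdiff : {ω | Z ω ∈ Set.Ioc a b} = {ω | Z ω ≤ b} \ {ω | Z ω ≤ a} := by
      ext x; simp [Set.Ioc, and_comm, not_le]
    have hsubset : {ω | Z ω ≤ a} ⊆ {ω | Z ω ≤ b} := fun x hx => le_trans hx hab
    have hP : P {ω | Z ω ∈ Set.Ioc a b}
        = P {ω | Z ω ≤ b} - P {ω | Z ω ≤ a} := by
      rw [hdiff]
      exact measure_diff hsubset (hmeasIic a).nullMeasurableSet (measure_ne_top P _)
    have htoReal : (P {ω | Z ω ∈ Set.Ioc a b}).toReal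
        = (P {ω | Z ω ≤ b}).toReal - (P {ω | Z ω ≤ a}).toReal := by
      rw [hP, ENNReal.toReal_sub_of_le (measure_mono hsubset) (measure_ne_top P _)]
    calc (∫ x in {ω | Z ω ∈ Set.Ioc a b}, Z x ∂P)
        ≤ ∫ _ in {ω | Z ω ∈ Set.Ioc a b}, b ∂P := by
          refine setIntegral_mono_on hZint.integrableOn (integrableOn_const ?_)
            (hmeasIoc a b) (fun x hx => hx.2)
          exact measure_ne_top P _
      _ = (P {ω | Z ω ∈ Set.Ioc a b}).toReal * b := by
          rw [setIntegral_const]; simp [smul_eq_mul, measureReal_def]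
      _ = b * ((P {ω | Z ω ≤ b}).toReal - (P {ω | Z ω ≤ a}).toReal) := by
          rw [htoReal]; ring
  -- auxiliary ℕ-indexed summand
  set g : ℕ → ℝ := fun i =>
    if h : i < n then z ⟨i, h⟩ *
      coverage (fun t => (P {ω | Z ω ≤ t}).toReal) z ⟨i, h⟩ else 0 with hg
  -- main induction
  have key : ∀ k, ∀ h : k < n,
      (∫ x in {ω | Z ω ≤ z ⟨k, h⟩}, Z x ∂P) ≤ ∑ i ∈ Finset.range (k + 1), g i := by
    intro k
    induction k with
    | zero =>
      intro h
      have : (∫ x in {ω | Z ω ≤ z ⟨0, h⟩}, Z x ∂P)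
          ≤ z ⟨0, h⟩ * (P {ω | Z ω ≤ z ⟨0, h⟩}).toReal := by
        calc (∫ x in {ω | Z ω ≤ z ⟨0, h⟩}, Z x ∂P)
            ≤ ∫ _ in {ω | Z ω ≤ z ⟨0, h⟩}, z ⟨0, h⟩ ∂P := by
              refine setIntegral_mono_on hZint.integrableOn (integrableOn_const ?_)
                (hmeasIic _) (fun x hx => hx)
              exact measure_ne_top P _
          _ = z ⟨0, h⟩ * (P {ω | Z ω ≤ z ⟨0, h⟩}).toReal := by
              rw [setIntegral_const]; simp [smul_eq_mul, mul_comm, measureReal_def]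
      simpa [g, h, coverage] using this
    | succ k ih =>
      intro h
      have hk : k < n := by omega
      have hle : z ⟨k, hk⟩ ≤ z ⟨k + 1, h⟩ := hmono (by simp [Fin.le_def])
      have hsplit : {ω | Z ω ≤ z ⟨k + 1, h⟩}
          = {ω | Z ω ≤ z ⟨k, hk⟩} ∪ {ω | Z ω ∈ Set.Ioc (z ⟨k, hk⟩) (z ⟨k + 1, h⟩)} := by
        ext x
        simp only [Set.mem_setOf_eq, Set.mem_union, Set.mem_Ioc]
        constructor
        · intro hx
          rcases le_or_gt (Z x) (z ⟨k, hk⟩) with h' | h'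
          · exact Or.inl h'
          · exact Or.inr ⟨h', hx⟩
        · rintro (hx | ⟨_, hx⟩)
          · exact hx.trans hle
          · exact hx
      have hdisj : Disjoint {ω | Z ω ≤ z ⟨k, hk⟩}
          {ω | Z ω ∈ Set.Ioc (z ⟨k, hk⟩) (z ⟨k + 1, h⟩)} := by
        refine Set.disjoint_left.2 fun x hx hx' => ?_
        exact absurd hx (not_le.2 hx'.1)
      have hint : (∫ x in {ω | Z ω ≤ z ⟨k + 1, h⟩}, Z x ∂P)
          = (∫ x in {ω | Z ω ≤ z ⟨k, hk⟩}, Z x ∂P)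
            + ∫ x in {ω | Z ω ∈ Set.Ioc (z ⟨k, hk⟩) (z ⟨k + 1, h⟩)}, Z x ∂P := by
        rw [hsplit]
        exact setIntegral_union hdisj (hmeasIoc _ _) hZint.integrableOn hZint.integrableOn
      have hcov : g (k + 1) = z ⟨k + 1, h⟩ *
          ((P {ω | Z ω ≤ z ⟨k + 1, h⟩}).toReal - (P {ω | Z ω ≤ z ⟨k, hk⟩}).toReal) := by
        simp only [hg, h, dif_pos, coverage]
        norm_num
      rw [Finset.sum_range_succ, hint]
      have := hslab (z ⟨k, hk⟩) (z ⟨k + 1, h⟩) hle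
      have := ih hk
      rw [hcov]
      linarith
  -- conclude: the whole space is a.e. `{Z ≤ z (n-1)}`
  have hrestrict : P.restrict {ω | Z ω ≤ z ⟨n - 1, by omega⟩} = P :=
    Measure.restrict_eq_self_of_ae_mem hub
  have hfinal := key (n - 1) (by omega)
  rw [hrestrict] at hfinal
  have hrange : ∑ i ∈ Finset.range (n - 1 + 1), g i = ∑ i : Fin n, z i *
      coverage (fun t => (P {ω | Z ω ≤ t}).toReal) z i := by
    have hn' : n - 1 + 1 = n := by omega
    rw [hn', ← Fin.sum_univ_eq_sum_range (fun i => g i) n]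
    refine Finset.sum_congr rfl fun i hi => ?_
    have hi' : (i : ℕ) < n := i.isLt
    simp [g, hi']
  rw [hrange] at hfinal
  exact hfinal

/-- with `Z_(1) ≤ ⋯ ≤ Z_(n)` the order statistics of iid copies
`Z_1, …, Z_{n-1}` of `Z` together with `Z_n := esssup Z`, and `W` the coverage vector
`W_i = F(Z_(i)) - F(Z_(i-1))` (with `F(Z_(0)) := 0`), almost surely
`E[Z] ≤ ∑_{i=1}^n Z_(i) W_i`. -/
theorem mean_le_sum_orderStat_mul_coverage
    {Ω : Type*} [MeasurableSpace Ω] (P : Measure Ω) [IsProbabilityMeasure P]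
    (n : ℕ) (hn : 1 ≤ n)
    (Z : Ω → ℝ) (hZmeas : Measurable Z) (hZint : Integrable Z P)
    (M : ℝ) (hM_ub : ∀ᵐ ω ∂P, Z ω ≤ M) (hM_least : ∀ c : ℝ, (∀ᵐ ω ∂P, Z ω ≤ c) → M ≤ c)
    (Zs : Fin (n - 1) → Ω → ℝ) (hZs_meas : ∀ i, Measurable (Zs i))
    (hZs_indep : iIndepFun Zs P)
    (hZs_law : ∀ i, Measure.map (Zs i) P = Measure.map Z P)
    (F : ℝ → ℝ) (hF : F = fun t => (P {ω | Z ω ≤ t}).toReal) :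
    ∀ᵐ ω ∂P, (∫ x, Z x ∂P) ≤
      ∑ i, sortedVec (fun j => fullVec Zs M j ω) i *
        coverage F (sortedVec fun j => fullVec Zs M j ω) i := by
  apply Filter.Eventually.of_forall
  intro ω
  set z : Fin n → ℝ := sortedVec (fun j => fullVec Zs M j ω) with hz
  have hmono : Monotone z := Tuple.monotone_sort _
  have hlast : n - 1 < n := by omega
  -- M appears among the entries, so the last (largest) sorted value is ≥ M
  have hMle : M ≤ z ⟨n - 1, hlast⟩ := by
    set σ := Tuple.sort (fun j => fullVec Zs M j ω)
    have h1 : z (σ⁻¹ ⟨n - 1, hlast⟩) = M := by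
      have : z (σ⁻¹ ⟨n - 1, hlast⟩) = fullVec Zs M (σ (σ⁻¹ ⟨n - 1, hlast⟩)) ω := rfl
      rw [this, show σ (σ⁻¹ ⟨n - 1, hlast⟩) = ⟨n - 1, hlast⟩ from σ.apply_symm_apply _]
      simp [fullVec]
    calc M = z (σ⁻¹ ⟨n - 1, hlast⟩) := h1.symm
      _ ≤ z ⟨n - 1, hlast⟩ := hmono (by
          have := (σ⁻¹ ⟨n - 1, hlast⟩).isLt
          simp only [Fin.le_def]; omega)
  have hub : ∀ᵐ x ∂P, Z x ≤ z ⟨n - 1, hlast⟩ := by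
    filter_upwards [hM_ub] with x hx using hx.trans hMle
  exact aux_mean_le P n hn Z hZmeas hZint z hmono hub F hF
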